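/- Let S ⊂ ℝ^d be a nonempty compact convex set with diameter D, let f : ℝ^d → ℝ have L-Lipschitz gradient on S with G := sup_{x∈S} ‖∇f(x)‖ < ∞, and let C ≥ max{L D², G D}. Let δ ≥ 0 and let g_δ(x^k) satisfy |⟨∇f(x^k) − g_δ(x^k), s − x^k⟩| ≤ δ for all s ∈ S. Set s^k ∈ argmin_{s ∈ S} ⟨g_δ(x^k), s − x^k⟩, g̃_k = ⟨g_δ(x^k), x^k − s^k⟩, ᾱ_k = max{g̃_k − δ, 0}/C, and x^{k+1} = x^k + ᾱ_k (s^k − x^k). Then f(x^{k+1}) ≤ f(x^k) − (max{g̃_k − δ, 0})² / (2C). -/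

import Mathlib

open RealInnerProductSpace

set_option maxHeartbeats 1000000 in
/-- Descent lemma along a segment for a function with Lipschitz gradient on a convex set. -/
theorem descent_lemma_aux {d : ℕ} (S : Set (EuclideanSpace ℝ (Fin d))) (hSconv : Convex ℝ S)
    (f : EuclideanSpace ℝ (Fin d) → ℝ) (L : ℝ)
    (hdiff : ∀ x ∈ S, DifferentiableAt ℝ f x)
    (hLip : ∀ x ∈ S, ∀ y ∈ S, ‖gradient f x - gradient f y‖ ≤ L * ‖x - y‖)
    (x s : EuclideanSpace ℝ (Fin d)) (hx : x ∈ S) (hs : s ∈ S)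
    (α : ℝ) (hα0 : 0 ≤ α) (hα1 : α ≤ 1) :
    f (x + α • (s - x)) ≤ f x + α * ⟪gradient f x, s - x⟫ + L * ‖s - x‖ ^ 2 * α ^ 2 / 2 := by
  set γ : ℝ → EuclideanSpace ℝ (Fin d) := fun t => x + t • (s - x) with hγ
  have hmemα : ∀ t ∈ Set.Icc (0:ℝ) α, γ t ∈ S := by
    intro t ht
    have ht1 : t ≤ 1 := le_trans ht.2 hα1
    have := hSconv hx hs (by linarith [ht.1] : (0:ℝ) ≤ 1 - t) ht.1 (by linarith)
    convert this using 1
    simp only [hγ]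
    module
  set b : ℝ := L * ‖s - x‖ ^ 2 with hb
  set φ' : ℝ → ℝ := fun t => ⟪gradient f (γ t), s - x⟫ with hφ'
  have hγ0 : γ 0 = x := by simp [hγ]
  have hdist : ∀ t ∈ Set.Icc (0:ℝ) α, ∀ u ∈ Set.Icc (0:ℝ) α,
      φ' t - φ' u ≤ b * |t - u| := by
    intro t ht u hu
    have h1 : ‖gradient f (γ t) - gradient f (γ u)‖ ≤ L * ‖γ t - γ u‖ :=
      hLip _ (hmemα t ht) _ (hmemα u hu)
    have h2 : ‖γ t - γ u‖ = |t - u| * ‖s - x‖ := by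
      have : γ t - γ u = (t - u) • (s - x) := by simp only [hγ]; module
      rw [this, norm_smul, Real.norm_eq_abs]
    have h3 : φ' t - φ' u = ⟪gradient f (γ t) - gradient f (γ u), s - x⟫ := by
      simp [hφ', inner_sub_left]
    calc φ' t - φ' u ≤ ‖gradient f (γ t) - gradient f (γ u)‖ * ‖s - x‖ := by
          rw [h3]; exact real_inner_le_norm _ _
      _ ≤ (L * ‖γ t - γ u‖) * ‖s - x‖ :=
          mul_le_mul_of_nonneg_right h1 (norm_nonneg _)
      _ = b * |t - u| := by rw [h2, hb]; ring
  have hderiv : ∀ t ∈ Set.uIcc (0:ℝ) α, HasDerivAt (fun u => f (γ u)) (φ' t) t := by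
    intro t ht
    rw [Set.uIcc_of_le hα0] at ht
    have hγd : HasDerivAt γ (s - x) t := by
      simpa [hγ] using ((hasDerivAt_id t).smul_const (s - x)).const_add x
    have hfd : HasFDerivAt f (InnerProductSpace.toDual ℝ _ (gradient f (γ t))) (γ t) :=
      hasGradientAt_iff_hasFDerivAt.mp (hdiff _ (hmemα t ht)).hasGradientAt
    have := hfd.comp_hasDerivAt t hγd
    simpa [hφ', InnerProductSpace.toDual_apply_apply, Function.comp_def] using this
  have hcontOn : ContinuousOn φ' (Set.uIcc (0:ℝ) α) := by
    rw [Set.uIcc_of_le hα0]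
    have hlip : LipschitzOnWith (Real.toNNReal b) φ' (Set.Icc 0 α) := by
      apply LipschitzOnWith.of_dist_le'
      intro t ht u hu
      rw [Real.dist_eq, Real.dist_eq]
      rw [abs_sub_le_iff]
      constructor
      · calc φ' t - φ' u ≤ b * |t - u| := hdist t ht u hu
          _ = b * |t - u| := rfl
      · calc φ' u - φ' t ≤ b * |u - t| := hdist u hu t ht
          _ = b * |t - u| := by rw [abs_sub_comm]
    exact hlip.continuousOn
  have hint : IntervalIntegrable φ' MeasureTheory.volume 0 α :=
    hcontOn.intervalIntegrable
  have hFTC : ∫ t in (0:ℝ)..α, φ' t = f (γ α) - f (γ 0) :=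
    intervalIntegral.integral_eq_sub_of_hasDerivAt hderiv hint
  have hint2 : IntervalIntegrable (fun t => φ' 0 + b * t) MeasureTheory.volume 0 α :=
    (continuous_const.add (continuous_const.mul continuous_id)).intervalIntegrable 0 α
  have hmono : ∫ t in (0:ℝ)..α, φ' t ≤ ∫ t in (0:ℝ)..α, (φ' 0 + b * t) := by
    apply intervalIntegral.integral_mono_on hα0 hint hint2
    intro t ht
    have h0 : (0:ℝ) ∈ Set.Icc (0:ℝ) α := Set.left_mem_Icc.mpr hα0
    have := hdist t ht 0 h0
    have ht0 : |t - 0| = t := by rw [sub_zero, abs_of_nonneg ht.1]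
    rw [ht0] at this
    linarith
  have hcalc : ∫ t in (0:ℝ)..α, (φ' 0 + b * t) = α * φ' 0 + b * α ^ 2 / 2 := by
    rw [intervalIntegral.integral_add intervalIntegrable_const
      (by apply Continuous.intervalIntegrable; exact continuous_const.mul continuous_id),
      intervalIntegral.integral_const_mul, intervalIntegral.integral_const, integral_id]
    simp only [smul_eq_mul, sub_zero]
    ring
  have hφ'0 : φ' 0 = ⟪gradient f x, s - x⟫ := by simp only [hφ', hγ0]
  have : f (γ α) - f x ≤ α * ⟪gradient f x, s - x⟫ + b * α ^ 2 / 2 := by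
    rw [← hφ'0, ← hcalc, ← hγ0]
    calc f (γ α) - f (γ 0) = ∫ t in (0:ℝ)..α, φ' t := hFTC.symm
      _ ≤ _ := hmono
  have hγα : γ α = x + α • (s - x) := rfl
  rw [← hγα]
  linarith

/-- Lemma 3.1 (one-step decrease of nonconvex Frank–Wolfe with a δ-oracle):
with stepsize `ᾱ = (g̃ - δ)₊ / C`, one step decreases `f` by at least
`(g̃ - δ)₊² / (2C)`. -/
theorem nonconvex_fw_delta_oracle_one_step_decrease {d : ℕ}
    (S : Set (EuclideanSpace ℝ (Fin d)))
    (hSne : S.Nonempty) (hScomp : IsCompact S) (hSconv : Convex ℝ S)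
    (f : EuclideanSpace ℝ (Fin d) → ℝ) (L C δ : ℝ) (hδ : 0 ≤ δ)
    (hdiff : ∀ x ∈ S, DifferentiableAt ℝ f x)
    (hLip : ∀ x ∈ S, ∀ y ∈ S, ‖gradient f x - gradient f y‖ ≤ L * ‖x - y‖)
    (hC : C ≥ max (L * (Metric.diam S) ^ 2)
      (sSup ((fun x => ‖gradient f x‖) '' S) * Metric.diam S))
    (x s : EuclideanSpace ℝ (Fin d)) (hx : x ∈ S) (hs : s ∈ S)
    (g : EuclideanSpace ℝ (Fin d))
    (horacle : ∀ t ∈ S, |⟪gradient f x - g, t - x⟫| ≤ δ)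
    (hmin : ∀ t ∈ S, ⟪g, s - x⟫ ≤ ⟪g, t - x⟫) :
    f (x + (max (⟪g, x - s⟫ - δ) 0 / C) • (s - x)) ≤
      f x - (max (⟪g, x - s⟫ - δ) 0) ^ 2 / (2 * C) := by
  set D := Metric.diam S with hD
  set G := sSup ((fun x => ‖gradient f x‖) '' S) with hG
  set m := max (⟪g, x - s⟫ - δ) 0 with hm
  have hDnn : 0 ≤ D := Metric.diam_nonneg
  have hsxD : ‖s - x‖ ≤ D := by
    rw [← dist_eq_norm]
    exact Metric.dist_le_diam_of_mem hScomp.isBounded hs hx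
  have hGx : ‖gradient f x‖ ≤ G := by
    apply le_csSup
    · refine ⟨‖gradient f x‖ + |L| * D, ?_⟩
      rintro _ ⟨y, hy, rfl⟩
      have h1 : ‖gradient f y - gradient f x‖ ≤ L * ‖y - x‖ := hLip y hy x hx
      have h2 : ‖y - x‖ ≤ D := by
        rw [← dist_eq_norm]; exact Metric.dist_le_diam_of_mem hScomp.isBounded hy hx
      have h3 : L * ‖y - x‖ ≤ |L| * D := by
        calc L * ‖y - x‖ ≤ |L| * ‖y - x‖ :=
              mul_le_mul_of_nonneg_right (le_abs_self L) (norm_nonneg _)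
          _ ≤ |L| * D := mul_le_mul_of_nonneg_left h2 (abs_nonneg L)
      calc ‖gradient f y‖ ≤ ‖gradient f x‖ + ‖gradient f y - gradient f x‖ := by
            have := norm_add_le (gradient f x) (gradient f y - gradient f x)
            simpa using this
        _ ≤ ‖gradient f x‖ + |L| * D := by linarith
    · exact ⟨x, hx, rfl⟩
  have hG0 : 0 ≤ G := le_trans (norm_nonneg _) hGx
  have hC0 : 0 ≤ C := le_trans (mul_nonneg hG0 hDnn) (le_trans (le_max_right _ _) hC)
  have hm0 : 0 ≤ m := le_max_right _ _
  -- the oracle bound at t = s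
  have hor : |⟪gradient f x - g, s - x⟫| ≤ δ := horacle s hs
  by_cases hcase : ⟪g, x - s⟫ - δ ≤ 0
  · have hmz : m = 0 := max_eq_right hcase
    rw [hmz]
    simp
  · push_neg at hcase
    have hmval : m = ⟪g, x - s⟫ - δ := max_eq_left (le_of_lt hcase)
    have hmpos : 0 < m := by rw [hmval]; exact hcase
    -- m ≤ C
    have hinner : ⟪gradient f x, x - s⟫ ≤ G * D := by
      calc ⟪gradient f x, x - s⟫ ≤ ‖gradient f x‖ * ‖x - s‖ := real_inner_le_norm _ _
        _ ≤ G * D := by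
          apply mul_le_mul hGx _ (norm_nonneg _) hG0
          rw [← dist_eq_norm]; exact Metric.dist_le_diam_of_mem hScomp.isBounded hx hs
    have hsplit : ⟪g, x - s⟫ = ⟪gradient f x, x - s⟫ - ⟪gradient f x - g, x - s⟫ := by
      rw [inner_sub_left]; ring
    have hor' : |⟪gradient f x - g, x - s⟫| ≤ δ := by
      have : ⟪gradient f x - g, x - s⟫ = -⟪gradient f x - g, s - x⟫ := by
        rw [← inner_neg_right]; congr 1; module
      rw [this, abs_neg]; exact hor
    have hmC : m ≤ C := by
      have h1 : ⟪g, x - s⟫ ≤ G * D + δ := by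
        rw [hsplit]
        have := abs_le.mp hor'
        linarith
      have h2 : G * D ≤ C := le_trans (le_max_right _ _) hC
      rw [hmval]; linarith
    have hCpos : 0 < C := lt_of_lt_of_le hmpos hmC
    -- s ≠ x, hence L ≥ 0
    have hsx : s ≠ x := by
      intro h
      rw [h] at hcase
      simp at hcase
      linarith
    have hL0 : 0 ≤ L := by
      have h1 : (0:ℝ) ≤ ‖gradient f x - gradient f s‖ := norm_nonneg _
      have h2 := hLip x hx s hs
      have h3 : 0 < ‖x - s‖ := by
        rw [norm_pos_iff, sub_ne_zero]
        exact fun h => hsx h.symm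
      nlinarith
    set α := m / C with hα
    have hα0 : 0 ≤ α := div_nonneg hm0 hC0
    have hα1 : α ≤ 1 := (div_le_one hCpos).mpr hmC
    have key := descent_lemma_aux S hSconv f L hdiff hLip x s hx hs α hα0 hα1
    -- bound the inner product term
    have h1 : ⟪gradient f x, s - x⟫ ≤ -m := by
      have ha : ⟪gradient f x, s - x⟫ = ⟪g, s - x⟫ + ⟪gradient f x - g, s - x⟫ := by
        rw [inner_sub_left]; ring
      have hb : ⟪g, s - x⟫ = -⟪g, x - s⟫ := by
        rw [← inner_neg_right]; congr 1; module
      have hc := abs_le.mp hor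
      rw [ha, hb, hmval]
      linarith
    -- bound the quadratic term
    have h2 : L * ‖s - x‖ ^ 2 ≤ C := by
      calc L * ‖s - x‖ ^ 2 ≤ L * D ^ 2 := by
            apply mul_le_mul_of_nonneg_left _ hL0
            exact pow_le_pow_left₀ (norm_nonneg _) hsxD 2
        _ ≤ C := le_trans (le_max_left _ _) hC
    have hchain : f (x + α • (s - x)) ≤ f x + α * (-m) + C * α ^ 2 / 2 := by
      have ha : α * ⟪gradient f x, s - x⟫ ≤ α * (-m) :=
        mul_le_mul_of_nonneg_left h1 hα0
      have hb : L * ‖s - x‖ ^ 2 * α ^ 2 / 2 ≤ C * α ^ 2 / 2 := by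
        nlinarith [sq_nonneg α]
      linarith
    have hfinal : f x + α * (-m) + C * α ^ 2 / 2 = f x - m ^ 2 / (2 * C) := by
      rw [hα]
      field_simp
      ring
    rw [hα] at hchain
    calc f (x + (m / C) • (s - x)) ≤ f x + m / C * (-m) + C * (m / C) ^ 2 / 2 := hchain
      _ = f x - m ^ 2 / (2 * C) := by field_simp; ring
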